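/- For any alphabet size k ≥ 1 and n ≥ 1, the number of reverse shuffle squares of length 2n over an alphabet of size k is at most C_n · k^n, where C_n is the n-th Catalan number. -/

import Mathlib

/-- A word `s` of length `2n` over alphabet `Fin k` is a reverse shuffle square if it
can be partitioned into two disjoint subsequences of length `n` that are reverses of
each other. -/
def IsRevShuffleSquare {n k : ℕ} (s : Fin (2 * n) → Fin k) : Prop :=
  ∃ I J : Fin n → Fin (2 * n), StrictMono I ∧ StrictMono J ∧
    (∀ r r' : Fin n, I r ≠ J r') ∧
    (∀ x : Fin (2 * n), (∃ r, I r = x) ∨ (∃ r, J r = x)) ∧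
    (∀ r : Fin n, s (I r) = s (J r.rev))

open scoped Classical

/-- pattern-123-avoidance -/
def RSSAvoid {n : ℕ} (σ : Fin n → Fin n) : Prop :=
  ∀ i j l : Fin n, i < j → j < l → σ i < σ j → σ j < σ l → False



/-- antitone functions strictly above the antidiagonal -/
def RSSBset (n : ℕ) : Finset (Fin n → Fin n) :=
  Finset.univ.filter (fun m => (∀ i j : Fin n, i ≤ j → m j ≤ m i) ∧
    ∀ i : Fin n, (m i : ℕ) + (i : ℕ) + 1 ≤ n)

lemma RSSBset_mem {n : ℕ} {m : Fin n → Fin n} :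
    m ∈ RSSBset n ↔ (∀ i j : ℕ, ∀ hi : i < n, ∀ hj : j < n, i ≤ j →
      (m ⟨j, hj⟩ : ℕ) ≤ (m ⟨i, hi⟩ : ℕ)) ∧
      ∀ i : ℕ, ∀ hi : i < n, (m ⟨i, hi⟩ : ℕ) + i + 1 ≤ n := by
  simp only [RSSBset, Finset.mem_filter, Finset.mem_univ, true_and]
  constructor
  · rintro ⟨h1, h2⟩
    exact ⟨fun i j hi hj hij => h1 ⟨i, hi⟩ ⟨j, hj⟩ hij, fun i hi => h2 ⟨i, hi⟩⟩
  · rintro ⟨h1, h2⟩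
    exact ⟨fun i j hij => h1 i.1 j.1 i.2 j.2 hij, fun i => h2 i.1 i.2⟩

noncomputable def RSSk {n : ℕ} (m : Fin (n+1) → Fin (n+1)) : ℕ :=
  Nat.find (⟨n, Or.inl rfl⟩ :
    ∃ i, i = n ∨ ∃ h : i < n + 1, (m ⟨i, h⟩ : ℕ) + i = n)

lemma RSSk_le {n : ℕ} (m : Fin (n+1) → Fin (n+1)) : RSSk m ≤ n :=
  Nat.find_le (Or.inl rfl)

lemma RSSk_lt {n : ℕ} (m : Fin (n+1) → Fin (n+1)) : RSSk m < n + 1 :=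
  Nat.lt_succ_of_le (RSSk_le m)

lemma RSSk_spec {n : ℕ} {m : Fin (n+1) → Fin (n+1)} (hm : m ∈ RSSBset (n+1)) :
    (m ⟨RSSk m, RSSk_lt m⟩ : ℕ) + RSSk m = n := by
  obtain ⟨hanti, hbd⟩ := RSSBset_mem.1 hm
  rcases Nat.find_spec (⟨n, Or.inl rfl⟩ :
      ∃ i, i = n ∨ ∃ h : i < n + 1, (m ⟨i, h⟩ : ℕ) + i = n) with h | ⟨h, he⟩
  · have hb := hbd (RSSk m) (RSSk_lt m)
    have h' : RSSk m = n := h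
    omega
  · exact he

lemma RSSk_min' {n : ℕ} {m : Fin (n+1) → Fin (n+1)} (hm : m ∈ RSSBset (n+1))
    {i : ℕ} (hi : i < RSSk m) :
    (m ⟨i, by have := RSSk_le m; omega⟩ : ℕ) + i < n := by
  obtain ⟨hanti, hbd⟩ := RSSBset_mem.1 hm
  have hlt : i < n + 1 := by have := RSSk_le m; omega
  have hnot := Nat.find_min (⟨n, Or.inl rfl⟩ :
      ∃ i, i = n ∨ ∃ h : i < n + 1, (m ⟨i, h⟩ : ℕ) + i = n) hi
  push_neg at hnot
  have h2 := hnot.2 hlt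
  have h3 := hbd i hlt
  omega

/-- lower bound below k -/
lemma RSSk_low {n : ℕ} {m : Fin (n+1) → Fin (n+1)} (hm : m ∈ RSSBset (n+1))
    {i : ℕ} (hik : i ≤ RSSk m) :
    n - RSSk m ≤ (m ⟨i, by have := RSSk_le m; omega⟩ : ℕ) := by
  obtain ⟨hanti, hbd⟩ := RSSBset_mem.1 hm
  have hks := RSSk_spec hm
  have := hanti i (RSSk m) (by have := RSSk_le m; omega) (RSSk_lt m) hik
  omega

noncomputable def RSSm1 {n : ℕ} (m : Fin (n+1) → Fin (n+1)) :
    Fin (RSSk m) → Fin (RSSk m) :=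
  fun i => ⟨min ((m ⟨i.1, by have := RSSk_le m; have := i.2; omega⟩ : ℕ) - (n - RSSk m))
      (RSSk m - 1), by have := i.2; omega⟩

noncomputable def RSSm2 {n : ℕ} (m : Fin (n+1) → Fin (n+1)) :
    Fin (n - RSSk m) → Fin (n - RSSk m) :=
  fun j => ⟨min ((m ⟨RSSk m + 1 + j.1, by have := RSSk_le m; have := j.2; omega⟩ : ℕ))
      (n - RSSk m - 1), by have := j.2; omega⟩

lemma RSSm1_val {n : ℕ} {m : Fin (n+1) → Fin (n+1)} (hm : m ∈ RSSBset (n+1))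
    (i : Fin (RSSk m)) :
    (RSSm1 m i : ℕ) = (m ⟨i.1, by have := RSSk_le m; have := i.2; omega⟩ : ℕ) - (n - RSSk m) := by
  have h1 := RSSk_min' hm i.2
  have h2 := RSSk_low hm (le_of_lt i.2)
  have : (RSSm1 m i : ℕ) = min ((m ⟨i.1, by have := RSSk_le m; have := i.2; omega⟩ : ℕ)
      - (n - RSSk m)) (RSSk m - 1) := rfl
  omega

lemma RSSm2_val {n : ℕ} {m : Fin (n+1) → Fin (n+1)} (hm : m ∈ RSSBset (n+1))
    (j : Fin (n - RSSk m)) :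
    (RSSm2 m j : ℕ) = (m ⟨RSSk m + 1 + j.1, by have := RSSk_le m; have := j.2; omega⟩ : ℕ) := by
  obtain ⟨hanti, hbd⟩ := RSSBset_mem.1 hm
  have hb := hbd (RSSk m + 1 + j.1) (by have := RSSk_le m; have := j.2; omega)
  have : (RSSm2 m j : ℕ) = min ((m ⟨RSSk m + 1 + j.1,
      by have := RSSk_le m; have := j.2; omega⟩ : ℕ)) (n - RSSk m - 1) := rfl
  have := j.2
  omega

noncomputable def RSSPhi {n : ℕ} (m : Fin (n+1) → Fin (n+1)) :
    Σ k : ℕ, ((Fin k → Fin k) × (Fin (n - k) → Fin (n - k))) :=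
  ⟨RSSk m, RSSm1 m, RSSm2 m⟩

noncomputable def RSSRecon {n : ℕ} (x : Σ k : ℕ, ((Fin k → Fin k) × (Fin (n - k) → Fin (n - k))))
    (i : Fin (n+1)) : ℕ :=
  if h : i.1 < x.1 then (x.2.1 ⟨i.1, h⟩ : ℕ) + (n - x.1)
  else if h' : i.1 = x.1 then n - x.1
  else if h'' : i.1 - x.1 - 1 < n - x.1 then (x.2.2 ⟨i.1 - x.1 - 1, h''⟩ : ℕ) else 0

lemma RSSRecon_eq {n : ℕ} {m : Fin (n+1) → Fin (n+1)} (hm : m ∈ RSSBset (n+1)) (i : Fin (n+1)) :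
    RSSRecon (RSSPhi m) i = (m i : ℕ) := by
  have hk := RSSk_le m
  have hks := RSSk_spec hm
  have hi2 := i.2
  rcases lt_trichotomy i.1 (RSSk m) with h | h | h
  · have : RSSRecon (RSSPhi m) i = (RSSm1 m ⟨i.1, h⟩ : ℕ) + (n - RSSk m) := by
      simp only [RSSRecon, RSSPhi]
      exact dif_pos h
    rw [this, RSSm1_val hm]
    have h2 := RSSk_low hm (le_of_lt h)
    have he : (m ⟨i.1, by omega⟩ : ℕ) = (m i : ℕ) := rfl
    rw [he] at h2 ⊢
    omega
  · have : RSSRecon (RSSPhi m) i = n - RSSk m := by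
      simp only [RSSRecon, RSSPhi]
      exact (dif_neg (show ¬ i.1 < RSSk m by omega)).trans (dif_pos h)
    rw [this]
    have he : m ⟨RSSk m, RSSk_lt m⟩ = m i := by
      congr 1
      exact Fin.ext h.symm
    rw [he] at hks
    omega
  · have hlt : i.1 - RSSk m - 1 < n - RSSk m := by omega
    have : RSSRecon (RSSPhi m) i = (RSSm2 m ⟨i.1 - RSSk m - 1, hlt⟩ : ℕ) := by
      simp only [RSSRecon, RSSPhi]
      exact (dif_neg (show ¬ i.1 < RSSk m by omega)).trans
        ((dif_neg (show ¬ i.1 = RSSk m by omega)).trans (dif_pos hlt))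
    rw [this, RSSm2_val hm]
    congr 1
    congr 1
    exact Fin.ext (by simp; omega)

theorem RSSBset_card_le : ∀ n : ℕ, (RSSBset n).card ≤ catalan n := by
  intro n
  induction n using Nat.strong_induction_on with
  | _ n ih =>
    match n with
    | 0 =>
      calc (RSSBset 0).card ≤ (Finset.univ : Finset (Fin 0 → Fin 0)).card :=
            Finset.card_filter_le _ _
        _ = 1 := by simp
        _ = catalan 0 := by rw [catalan_zero]
    | (n+1) =>
      have hmaps : ∀ m ∈ RSSBset (n+1), RSSPhi m ∈
          (Finset.range (n+1)).sigma (fun k => (RSSBset k) ×ˢ (RSSBset (n - k))) := by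
        intro m hm
        have hk := RSSk_le m
        have h1 : RSSk m ∈ Finset.range (n+1) := Finset.mem_range.2 (by omega)
        have h2 : RSSm1 m ∈ RSSBset (RSSk m) := by
          rw [RSSBset_mem]
          constructor
          · intro i j hi hj hij
            rw [RSSm1_val hm ⟨i, hi⟩, RSSm1_val hm ⟨j, hj⟩]
            obtain ⟨hanti, hbd⟩ := RSSBset_mem.1 hm
            have := hanti i j (by omega) (by omega) hij
            simp only [Fin.val_mk] at *
            omega
          · intro i hi
            rw [RSSm1_val hm ⟨i, hi⟩]
            have ha1 := RSSk_min' hm hi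
            have ha2 := RSSk_low hm (le_of_lt hi)
            simp only [Fin.val_mk] at *
            omega
        have h3 : RSSm2 m ∈ RSSBset (n - RSSk m) := by
          rw [RSSBset_mem]
          constructor
          · intro i j hi hj hij
            rw [RSSm2_val hm ⟨i, hi⟩, RSSm2_val hm ⟨j, hj⟩]
            obtain ⟨hanti, hbd⟩ := RSSBset_mem.1 hm
            simp only [Fin.val_mk] at *
            exact hanti _ _ (by omega) (by omega) (by omega)
          · intro i hi
            rw [RSSm2_val hm ⟨i, hi⟩]
            obtain ⟨hanti, hbd⟩ := RSSBset_mem.1 hm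
            have := hbd (RSSk m + 1 + i) (by omega)
            simp only [Fin.val_mk] at *
            omega
        exact Finset.mem_sigma.2 ⟨h1, Finset.mem_product.2 ⟨h2, h3⟩⟩
      have hinj : Set.InjOn RSSPhi ((RSSBset (n+1) : Finset (Fin (n+1) → Fin (n+1))) : Set (Fin (n+1) → Fin (n+1))) := by
        intro m hm m' hm' he
        have hm2 := hm; have hm2' := hm'
        rw [Finset.mem_coe] at hm2 hm2'
        funext i
        have h1 := RSSRecon_eq hm2 i
        have h2 := RSSRecon_eq hm2' i
        rw [he] at h1
        exact Fin.ext (by omega)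
      calc (RSSBset (n+1)).card
          ≤ ((Finset.range (n+1)).sigma (fun k => (RSSBset k) ×ˢ (RSSBset (n - k)))).card :=
            Finset.card_le_card_of_injOn _ hmaps hinj
        _ = ∑ x ∈ Finset.range (n+1), ((RSSBset x) ×ˢ (RSSBset (n - x))).card :=
            Finset.card_sigma _ _
        _ ≤ ∑ x ∈ Finset.range (n+1), catalan x * catalan (n - x) := by
            apply Finset.sum_le_sum
            intro x hx
            rw [Finset.card_product]
            have hx' := Finset.mem_range.1 hx
            exact Nat.mul_le_mul (ih x (by omega)) (ih (n - x) (by omega))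
        _ = catalan (n+1) := by
            rw [catalan_succ, ← Fin.sum_univ_eq_sum_range]


noncomputable def RSSrunmin {n : ℕ} (σ : Fin n → Fin n) (i : Fin n) : Fin n :=
  ((Finset.Iic i).image σ).min' (Finset.Nonempty.image ⟨i, Finset.mem_Iic.2 le_rfl⟩ σ)

lemma RSSrunmin_le {n : ℕ} (σ : Fin n → Fin n) {i j : Fin n} (h : j ≤ i) :
    RSSrunmin σ i ≤ σ j :=
  Finset.min'_le _ _ (Finset.mem_image.2 ⟨j, Finset.mem_Iic.2 h, rfl⟩)

lemma RSSrunmin_exists {n : ℕ} (σ : Fin n → Fin n) (i : Fin n) :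
    ∃ j ≤ i, σ j = RSSrunmin σ i := by
  have := Finset.min'_mem ((Finset.Iic i).image σ)
    (Finset.Nonempty.image ⟨i, Finset.mem_Iic.2 le_rfl⟩ σ)
  rw [Finset.mem_image] at this
  obtain ⟨j, hj, he⟩ := this
  exact ⟨j, Finset.mem_Iic.1 hj, he⟩

lemma RSSrunmin_key {n : ℕ} {σ τ : Fin n → Fin n}
    (hσb : Function.Bijective σ) (hσa : RSSAvoid σ) (hτinj : Function.Injective τ)
    (i : Fin n) (hpre : ∀ h : Fin n, h < i → σ h = τ h)
    (hlt : σ i < τ i) (hm : RSSrunmin σ i = RSSrunmin τ i) : False := by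
  have hμσ : RSSrunmin σ i ≤ σ i := RSSrunmin_le σ le_rfl
  rcases eq_or_lt_of_le hμσ with heq | hltμ
  · obtain ⟨h, hhi, hτh⟩ := RSSrunmin_exists τ i
    have hτhv : τ h = σ i := by rw [hτh, ← hm, ← heq]
    have hhne : h ≠ i := by
      intro he
      rw [he] at hτhv
      rw [hτhv] at hlt
      exact lt_irrefl _ hlt
    have hh : h < i := lt_of_le_of_ne hhi hhne
    have hσhv : σ h = σ i := by rw [hpre h hh, hτhv]
    exact hhne (hσb.1 hσhv)
  · obtain ⟨h, hhi, hσh⟩ := RSSrunmin_exists σ i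
    have hh : h < i := by
      rcases lt_or_eq_of_le hhi with hh | he
      · exact hh
      · rw [he] at hσh
        rw [hσh] at hltμ
        exact absurd hltμ (lt_irrefl _)
    obtain ⟨j, hj⟩ := hσb.2 (τ i)
    have hij : i < j := by
      rcases lt_trichotomy j i with hji | he | hij
      · rw [hpre j hji] at hj
        exact absurd (hτinj hj) (ne_of_lt hji)
      · rw [he] at hj
        rw [hj] at hlt
        exact absurd hlt (lt_irrefl _)
      · exact hij
    exact hσa h i j hh hij (by rw [hσh]; exact hltμ) (by rw [hj]; exact hlt)

lemma RSSrunmin_inj {n : ℕ} {σ τ : Fin n → Fin n}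
    (hσb : Function.Bijective σ) (hσa : RSSAvoid σ)
    (hτb : Function.Bijective τ) (hτa : RSSAvoid τ)
    (h : RSSrunmin σ = RSSrunmin τ) : σ = τ := by
  by_contra hne
  have hex : (Finset.univ.filter (fun i : Fin n => σ i ≠ τ i)).Nonempty := by
    rw [Finset.filter_nonempty_iff]
    by_contra hc
    push_neg at hc
    exact hne (funext fun i => hc i (Finset.mem_univ i))
  set i := (Finset.univ.filter (fun i : Fin n => σ i ≠ τ i)).min' hex with hidef
  have hi : σ i ≠ τ i := by
    have := Finset.min'_mem _ hex
    rw [Finset.mem_filter] at this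
    exact this.2
  have hpre : ∀ h : Fin n, h < i → σ h = τ h := by
    intro h hh
    by_contra hc
    have : i ≤ h := Finset.min'_le (Finset.univ.filter (fun i : Fin n => σ i ≠ τ i)) h
      (Finset.mem_filter.2 ⟨Finset.mem_univ _, hc⟩)
    exact absurd hh (not_lt.2 this)
  rcases hi.lt_or_gt with hlt | hlt
  · exact RSSrunmin_key hσb hσa hτb.1 i hpre hlt (congrFun h i)
  · exact RSSrunmin_key hτb hτa hσb.1 i (fun h hh => (hpre h hh).symm) hlt (congrFun h.symm i)

lemma RSSrunmin_mem {n : ℕ} {σ : Fin n → Fin n} (hσ : Function.Injective σ) :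
    (∀ i j : Fin n, i ≤ j → RSSrunmin σ j ≤ RSSrunmin σ i) ∧
      ∀ i : Fin n, (RSSrunmin σ i : ℕ) + (i : ℕ) + 1 ≤ n := by
  constructor
  · intro i j hij
    obtain ⟨l, hl, he⟩ := RSSrunmin_exists σ i
    rw [← he]
    exact RSSrunmin_le σ (hl.trans hij)
  · intro i
    have hcard : ((Finset.Iic i).image σ).card = (i : ℕ) + 1 := by
      rw [Finset.card_image_of_injective _ hσ, Fin.card_Iic]
    have hsub : (Finset.Iic i).image σ ⊆ Finset.Ici (RSSrunmin σ i) := by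
      intro x hx
      exact Finset.mem_Ici.2 (Finset.min'_le _ _ hx)
    have hle := Finset.card_le_card hsub
    rw [hcard, Fin.card_Ici] at hle
    have := (RSSrunmin σ i).2
    omega


lemma RSS_exists_sigma {n k : ℕ} (s : Fin (2*n) → Fin k) (hs : IsRevShuffleSquare s) :
    ∃ σ : Fin n → Fin n, Function.Bijective σ ∧ RSSAvoid σ ∧
      ∀ p : Fin n, s ⟨p.1, by have := p.isLt; omega⟩
        = s ⟨n + (σ p).1, by have := (σ p).isLt; omega⟩ := by
  obtain ⟨I, J, hI, hJ, hdisj, hcover, hmatch⟩ := hs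
  set b : Fin n → Fin (2*n) := fun r => J r.rev with hbdef
  have hbanti : ∀ {r t : Fin n}, r < t → b t < b r := fun h => hJ (Fin.rev_lt_rev.mpr h)
  have hne : ∀ r : Fin n, I r ≠ b r := fun r => hdisj r r.rev
  set c : Fin n → Fin (2*n) := fun r => min (I r) (b r) with hcdef
  set d : Fin n → Fin (2*n) := fun r => max (I r) (b r) with hddef
  have hc_eq : ∀ r, c r = min (I r) (b r) := fun r => rfl
  have hd_eq : ∀ r, d r = max (I r) (b r) := fun r => rfl
  have hcd : ∀ r, c r < d r := fun r => min_lt_max.mpr (hne r)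
  have claim1 : ∀ r t, c r < d t := by
    intro r t
    rcases lt_trichotomy r t with h | h | h
    · calc c r ≤ I r := min_le_left _ _
        _ < I t := hI h
        _ ≤ d t := le_max_left _ _
    · rw [h]; exact hcd t
    · calc c r ≤ b r := min_le_right _ _
        _ < b t := hbanti h
        _ ≤ d t := le_max_right _ _
  have hcinj : Function.Injective c := by
    intro r t h
    rw [hc_eq, hc_eq] at h
    rcases min_cases (I r) (b r) with ⟨h1, -⟩ | ⟨h1, -⟩ <;>
      rcases min_cases (I t) (b t) with ⟨h2, -⟩ | ⟨h2, -⟩ <;> rw [h1, h2] at h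
    · exact hI.injective h
    · exact absurd h (hdisj r t.rev)
    · exact absurd h.symm (hdisj t r.rev)
    · exact Fin.rev_injective (hJ.injective h)
  have hdinj : Function.Injective d := by
    intro r t h
    rw [hd_eq, hd_eq] at h
    rcases max_cases (I r) (b r) with ⟨h1, -⟩ | ⟨h1, -⟩ <;>
      rcases max_cases (I t) (b t) with ⟨h2, -⟩ | ⟨h2, -⟩ <;> rw [h1, h2] at h
    · exact hI.injective h
    · exact absurd h (hdisj r t.rev)
    · exact absurd h.symm (hdisj t r.rev)
    · exact Fin.rev_injective (hJ.injective h)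
  have hcn : ∀ r, (c r).1 < n := by
    intro r
    have himg : (Finset.univ.image d).card = n := by
      rw [Finset.card_image_of_injective _ hdinj, Finset.card_univ, Fintype.card_fin]
    have hsub : Finset.univ.image d ⊆ Finset.Ioi (c r) := by
      intro x hx
      rw [Finset.mem_image] at hx
      obtain ⟨t, -, rfl⟩ := hx
      exact Finset.mem_Ioi.2 (claim1 r t)
    have h2 := Finset.card_le_card hsub
    rw [himg, Fin.card_Ioi] at h2
    have := (c r).isLt
    omega
  have hdn : ∀ r, n ≤ (d r).1 := by
    intro r
    have himg : (Finset.univ.image c).card = n := by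
      rw [Finset.card_image_of_injective _ hcinj, Finset.card_univ, Fintype.card_fin]
    have hsub : Finset.univ.image c ⊆ Finset.Iio (d r) := by
      intro x hx
      rw [Finset.mem_image] at hx
      obtain ⟨t, -, rfl⟩ := hx
      exact Finset.mem_Iio.2 (claim1 t r)
    have h2 := Finset.card_le_card hsub
    rw [himg, Fin.card_Iio] at h2
    exact h2
  set c' : Fin n → Fin n := fun r => ⟨(c r).1, hcn r⟩ with hc'def
  have hc'inj : Function.Injective c' := by
    intro r t h
    have hv : (c' r).val = (c' t).val := congrArg Fin.val h
    exact hcinj (Fin.ext hv)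
  have hc'bij : Function.Bijective c' := Finite.injective_iff_bijective.mp hc'inj
  set e := Equiv.ofBijective c' hc'bij with hedef
  set σ : Fin n → Fin n :=
    fun i => ⟨(d (e.symm i)).1 - n, by have := (d (e.symm i)).isLt; omega⟩ with hσdef
  have hσval : ∀ i, (σ i : ℕ) = (d (e.symm i)).1 - n := fun i => rfl
  have hdval : ∀ i, (d (e.symm i)).1 = n + (σ i : ℕ) := by
    intro i
    have := hdn (e.symm i)
    rw [hσval]
    omega
  have hσinj : Function.Injective σ := by
    intro i j h
    have h1 : (d (e.symm i)).1 = (d (e.symm j)).1 := by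
      have := congrArg Fin.val h
      rw [hσval, hσval] at this
      have hi := hdn (e.symm i)
      have hj := hdn (e.symm j)
      omega
    have h2 : e.symm i = e.symm j := hdinj (Fin.ext h1)
    exact e.symm.injective h2
  have hσbij : Function.Bijective σ := Finite.injective_iff_bijective.mp hσinj
  have hcval : ∀ i : Fin n, (c (e.symm i)).1 = i.1 := by
    intro i
    have h := e.apply_symm_apply i
    have hv : (c' (e.symm i)).val = i.val := congrArg Fin.val h
    exact hv
  have hmatch2 : ∀ r, s (c r) = s (d r) := by
    intro r
    rcases le_total (I r) (b r) with h | h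
    · rw [hc_eq, hd_eq, min_eq_left h, max_eq_right h]
      exact hmatch r
    · rw [hc_eq, hd_eq, min_eq_right h, max_eq_left h]
      exact (hmatch r).symm
  have Ltt : ∀ r t, c r < c t → d r < d t → I r ≤ b r → I t ≤ b t → False := by
    intro r t hc hd h1 h2
    rw [hc_eq, hc_eq, min_eq_left h1, min_eq_left h2] at hc
    rw [hd_eq, hd_eq, max_eq_right h1, max_eq_right h2] at hd
    exact absurd hd (not_lt.2 (le_of_lt (hbanti (hI.lt_iff_lt.mp hc))))
  have Lff : ∀ r t, c r < c t → d r < d t → b r ≤ I r → b t ≤ I t → False := by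
    intro r t hc hd h1 h2
    rw [hc_eq, hc_eq, min_eq_right h1, min_eq_right h2] at hc
    rw [hd_eq, hd_eq, max_eq_left h1, max_eq_left h2] at hd
    have htr : t < r := by
      rcases lt_trichotomy r t with h | h | h
      · exact absurd hc (not_lt.2 (le_of_lt (hbanti h)))
      · rw [h] at hc; exact absurd hc (lt_irrefl _)
      · exact h
    exact absurd hd (not_lt.2 (le_of_lt (hI htr)))
  have havoid : RSSAvoid σ := by
    intro i j l hij hjl h1 h2
    have hcij : c (e.symm i) < c (e.symm j) := by
      rw [Fin.lt_def, hcval, hcval]; exact hij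
    have hcjl : c (e.symm j) < c (e.symm l) := by
      rw [Fin.lt_def, hcval, hcval]; exact hjl
    have hcil : c (e.symm i) < c (e.symm l) := hcij.trans hcjl
    have hdij : d (e.symm i) < d (e.symm j) := by
      rw [Fin.lt_def, hdval, hdval]
      have : (σ i : ℕ) < (σ j : ℕ) := h1
      omega
    have hdjl : d (e.symm j) < d (e.symm l) := by
      rw [Fin.lt_def, hdval, hdval]
      have : (σ j : ℕ) < (σ l : ℕ) := h2
      omega
    have hdil : d (e.symm i) < d (e.symm l) := hdij.trans hdjl
    by_cases t1 : I (e.symm i) ≤ b (e.symm i) <;>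
      by_cases t2 : I (e.symm j) ≤ b (e.symm j) <;>
      by_cases t3 : I (e.symm l) ≤ b (e.symm l)
    · exact Ltt _ _ hcij hdij t1 t2
    · exact Ltt _ _ hcij hdij t1 t2
    · exact Ltt _ _ hcil hdil t1 t3
    · exact Lff _ _ hcjl hdjl (le_of_not_ge t2) (le_of_not_ge t3)
    · exact Ltt _ _ hcjl hdjl t2 t3
    · exact Lff _ _ hcil hdil (le_of_not_ge t1) (le_of_not_ge t3)
    · exact Lff _ _ hcij hdij (le_of_not_ge t1) (le_of_not_ge t2)
    · exact Lff _ _ hcij hdij (le_of_not_ge t1) (le_of_not_ge t2)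
  refine ⟨σ, hσbij, havoid, ?_⟩
  intro p
  have h1 : (⟨p.1, by have := p.isLt; omega⟩ : Fin (2*n)) = c (e.symm p) :=
    Fin.ext (hcval p).symm
  have h2 : (⟨n + (σ p).1, by have := (σ p).isLt; omega⟩ : Fin (2*n)) = d (e.symm p) :=
    Fin.ext (hdval p).symm
  rw [h1, h2]
  exact hmatch2 _

noncomputable def RSSsigma {n k : ℕ} (s : Fin (2*n) → Fin k) : Fin n → Fin n :=
  if h : IsRevShuffleSquare s then (RSS_exists_sigma s h).choose else (fun i => i)

lemma RSSsigma_spec {n k : ℕ} {s : Fin (2*n) → Fin k} (h : IsRevShuffleSquare s) :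
    Function.Bijective (RSSsigma s) ∧ RSSAvoid (RSSsigma s) ∧
      ∀ p : Fin n, s ⟨p.1, by have := p.isLt; omega⟩
        = s ⟨n + (RSSsigma s p).1, by have := (RSSsigma s p).isLt; omega⟩ := by
  simp only [RSSsigma, dif_pos h]
  exact (RSS_exists_sigma s h).choose_spec

attribute [irreducible] RSSsigma

open scoped Classical in
theorem card_revShuffleSquares_le (n k : ℕ) (hn : 1 ≤ n) (hk : 1 ≤ k) :
    (Finset.univ.filter (fun s : Fin (2 * n) → Fin k => IsRevShuffleSquare s)).card
      ≤ catalan n * k ^ n := by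
  have hmaps : ∀ s ∈ Finset.univ.filter (fun s : Fin (2 * n) → Fin k => IsRevShuffleSquare s),
      (RSSrunmin (RSSsigma s), fun p : Fin n => s ⟨p.1, by have := p.isLt; omega⟩)
        ∈ (RSSBset n) ×ˢ (Finset.univ : Finset (Fin n → Fin k)) := by
    intro s hs
    rw [Finset.mem_filter] at hs
    obtain ⟨hb, -, -⟩ := RSSsigma_spec hs.2
    obtain ⟨ha1, ha2⟩ := RSSrunmin_mem hb.1
    exact Finset.mem_product.2 ⟨Finset.mem_filter.2 ⟨Finset.mem_univ _, ha1, ha2⟩,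
      Finset.mem_univ _⟩
  have hinj : Set.InjOn
      (fun s : Fin (2 * n) → Fin k =>
        (RSSrunmin (RSSsigma s), fun p : Fin n => s ⟨p.1, by have := p.isLt; omega⟩))
      ((Finset.univ.filter (fun s : Fin (2 * n) → Fin k => IsRevShuffleSquare s)) :
        Finset (Fin (2 * n) → Fin k)) := by
    intro s hs s' hs' he
    rw [Finset.mem_coe, Finset.mem_filter] at hs hs'
    obtain ⟨hb, ha, hmt⟩ := RSSsigma_spec hs.2
    obtain ⟨hb', ha', hmt'⟩ := RSSsigma_spec hs'.2
    have h1 : RSSrunmin (RSSsigma s) = RSSrunmin (RSSsigma s') := congrArg Prod.fst he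
    have h2 : (fun p : Fin n => s ⟨p.1, by have := p.isLt; omega⟩)
        = (fun p : Fin n => s' ⟨p.1, by have := p.isLt; omega⟩) := congrArg Prod.snd he
    have hσ : RSSsigma s = RSSsigma s' := RSSrunmin_inj hb ha hb' ha' h1
    funext x
    rcases lt_or_ge x.1 n with hx | hx
    · exact congrFun h2 ⟨x.1, hx⟩
    · obtain ⟨p, hp⟩ := hb.2 ⟨x.1 - n, by have := x.isLt; omega⟩
      have hxp : (⟨n + (RSSsigma s p).1, by have := (RSSsigma s p).isLt; omega⟩ :
          Fin (2 * n)) = x := by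
        apply Fin.ext
        have : (RSSsigma s p).1 = x.1 - n := congrArg Fin.val hp
        simp only [this]
        omega
      have e1 : s x = s ⟨p.1, by have := p.isLt; omega⟩ :=
        ((hmt p).trans (congrArg s hxp)).symm
      have hp' : RSSsigma s' p = (⟨x.1 - n, by have := x.isLt; omega⟩ : Fin n) :=
        (congrFun hσ p).symm.trans hp
      have hxp' : (⟨n + (RSSsigma s' p).1, by have := (RSSsigma s' p).isLt; omega⟩ :
          Fin (2 * n)) = x := by
        apply Fin.ext
        have hvv : (RSSsigma s' p).1 = x.1 - n := congrArg Fin.val hp'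
        simp only [hvv]
        omega
      have e2 : s' x = s' ⟨p.1, by have := p.isLt; omega⟩ :=
        ((hmt' p).trans (congrArg s' hxp')).symm
      exact e1.trans ((congrFun h2 p).trans e2.symm)
  calc (Finset.univ.filter (fun s : Fin (2 * n) → Fin k => IsRevShuffleSquare s)).card
      ≤ ((RSSBset n) ×ˢ (Finset.univ : Finset (Fin n → Fin k))).card :=
        Finset.card_le_card_of_injOn _ hmaps hinj
    _ = (RSSBset n).card * k ^ n := by
        rw [Finset.card_product, Finset.card_univ, Fintype.card_fun, Fintype.card_fin,
          Fintype.card_fin]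
    _ ≤ catalan n * k ^ n := Nat.mul_le_mul_right _ (RSSBset_card_le n)
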